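/- Let 0 < ε < 1/2, let r be a positive natural number, and let w_1, …, w_r be independent random variables, each uniformly distributed on [0,1]. Let X = #{ j : w_j < 1/2 − ε } and Y = #{ j : w_j > 1/2 + ε }. Then P(X ≥ r/2) = P(Y ≥ r/2) ≤ exp(−ε² r). -/

import Mathlib

open MeasureTheory ProbabilityTheory

section CandidateAux

lemma count_event_eq_sum {Ω : Type*} [MeasurableSpace Ω] (μ : Measure Ω)
    [IsProbabilityMeasure μ] {r : ℕ} (w : Fin r → Ω → ℝ)
    (hmeas : ∀ j, Measurable (w j))
    (hindep : iIndepFun w μ)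
    (P : ℝ → Prop) [DecidablePred P] (hP : MeasurableSet {x | P x})
    (p : ENNReal) (hp : ∀ j, μ (w j ⁻¹' {x | P x}) = p) :
    μ {ω | (r : ℝ) / 2 ≤ ((Finset.univ.filter fun j => P (w j ω)).card : ℝ)}
      = ∑ S ∈ Finset.univ.filter (fun S : Finset (Fin r) => (r : ℝ) / 2 ≤ (S.card : ℝ)),
          p ^ S.card * (1 - p) ^ (r - S.card) := by
  classical
  set E : Finset (Fin r) → Set Ω :=
    fun S => ⋂ j, w j ⁻¹' (if j ∈ S then {x | P x} else {x | P x}ᶜ) with hE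
  have hEdef : ∀ (S : Finset (Fin r)) (ω : Ω),
      ω ∈ E S ↔ (Finset.univ.filter fun j => P (w j ω)) = S := by
    intro S ω
    simp only [hE, Set.mem_iInter, Set.mem_preimage]
    constructor
    · intro h
      ext j
      simp only [Finset.mem_filter, Finset.mem_univ, true_and]
      have hj := h j
      by_cases hjS : j ∈ S
      · simp only [hjS, if_true, Set.mem_setOf_eq] at hj
        exact ⟨fun _ => hjS, fun _ => hj⟩
      · simp only [hjS, if_false, Set.mem_compl_iff, Set.mem_setOf_eq] at hj
        exact ⟨fun h' => absurd h' hj, fun h' => absurd h' hjS⟩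
    · intro h j
      by_cases hjS : j ∈ S
      · simp only [hjS, if_true, Set.mem_setOf_eq]
        have := h ▸ hjS
        exact (Finset.mem_filter.mp this).2
      · simp only [hjS, if_false, Set.mem_compl_iff, Set.mem_setOf_eq]
        intro hPj
        exact hjS (h ▸ Finset.mem_filter.mpr ⟨Finset.mem_univ j, hPj⟩)
  have hsets : ∀ (S : Finset (Fin r)) (j : Fin r),
      MeasurableSet (if j ∈ S then {x | P x} else {x | P x}ᶜ) := by
    intro S j; split_ifs; exacts [hP, hP.compl]
  have hEmeas : ∀ S, MeasurableSet (E S) :=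
    fun S => MeasurableSet.iInter fun j => (hmeas j) (hsets S j)
  have hEmeasure : ∀ S : Finset (Fin r),
      μ (E S) = p ^ S.card * (1 - p) ^ (r - S.card) := by
    intro S
    have h1 := hindep.measure_inter_preimage_eq_mul
      (sets := fun j => if j ∈ S then {x | P x} else {x | P x}ᶜ) Finset.univ
      (fun j _ => hsets S j)
    have h2 : E S = ⋂ j ∈ Finset.univ, w j ⁻¹' (if j ∈ S then {x | P x} else {x | P x}ᶜ) := by
      simp [hE]
    rw [h2, h1]
    have h3 : ∀ j : Fin r, μ (w j ⁻¹' (if j ∈ S then {x | P x} else {x | P x}ᶜ))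
        = if j ∈ S then p else 1 - p := by
      intro j
      by_cases hjS : j ∈ S
      · simp only [hjS, if_true]; exact hp j
      · simp only [hjS, if_false]
        rw [Set.preimage_compl, measure_compl ((hmeas j) hP) (measure_ne_top μ _),
          measure_univ, hp j]
    rw [Finset.prod_congr rfl (fun j _ => h3 j), Finset.prod_ite, Finset.prod_const,
      Finset.prod_const]
    congr 2
    · exact congrArg Finset.card (by ext j; simp)
    · have : Finset.univ.filter (fun j => ¬ j ∈ S) = Sᶜ := by ext j; simp
      rw [this, Finset.card_compl, Fintype.card_fin]
  have hdisj : (↑(Finset.univ.filter (fun S : Finset (Fin r) => (r : ℝ) / 2 ≤ (S.card : ℝ))) :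
      Set (Finset (Fin r))).PairwiseDisjoint E := by
    intro S _ T _ hne
    refine Set.disjoint_left.mpr fun ω hS hT => hne ?_
    exact ((hEdef S ω).mp hS).symm.trans ((hEdef T ω).mp hT) ▸ rfl
  have hevent : {ω | (r : ℝ) / 2 ≤ ((Finset.univ.filter fun j => P (w j ω)).card : ℝ)}
      = ⋃ S ∈ Finset.univ.filter (fun S : Finset (Fin r) => (r : ℝ) / 2 ≤ (S.card : ℝ)), E S := by
    ext ω
    simp only [Set.mem_setOf_eq, Set.mem_iUnion, Finset.mem_filter, Finset.mem_univ, true_and,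
      exists_prop, hEdef]
    constructor
    · intro h; exact ⟨_, h, rfl⟩
    · rintro ⟨S, hS, rfl⟩; exact hS
  rw [hevent, measure_biUnion_finset hdisj (fun S _ => hEmeas S)]
  exact Finset.sum_congr rfl fun S _ => hEmeasure S


lemma real_tail_bound (ε : ℝ) (hε0 : 0 < ε) (hε : ε < 1 / 2) (r : ℕ) :
    ∑ S ∈ Finset.univ.filter (fun S : Finset (Fin r) => (r : ℝ) / 2 ≤ (S.card : ℝ)),
      (1 / 2 - ε) ^ S.card * (1 / 2 + ε) ^ (r - S.card) ≤ Real.exp (-(ε ^ 2) * r) := by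
  classical
  set p : ℝ := 1 / 2 - ε with hpdef
  set q : ℝ := 1 / 2 + ε with hqdef
  have hp0 : 0 < p := by simp only [hpdef]; linarith
  have hq0 : 0 < q := by simp only [hqdef]; linarith
  have hpq : p ≤ q := by simp only [hpdef, hqdef]; linarith
  have hterm : ∀ S ∈ Finset.univ.filter
      (fun S : Finset (Fin r) => (r : ℝ) / 2 ≤ (S.card : ℝ)),
      p ^ S.card * q ^ (r - S.card) ≤ Real.sqrt ((p * q) ^ r) := by
    intro S hS
    set k := S.card with hk
    have hkr : k ≤ r := by
      have := Finset.card_le_univ S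
      simpa [Finset.card_univ] using this
    have h2k : r ≤ 2 * k := by
      have h := (Finset.mem_filter.mp hS).2
      have : (r : ℝ) ≤ 2 * k := by linarith
      exact_mod_cast this
    apply Real.le_sqrt_of_sq_le
    have e1 : 2 * k = r + (2 * k - r) := by omega
    have e2 : (2 * k - r) + 2 * (r - k) = r := by omega
    calc (p ^ k * q ^ (r - k)) ^ 2 = p ^ (2 * k) * q ^ (2 * (r - k)) := by
          rw [mul_pow, ← pow_mul, ← pow_mul, mul_comm k 2, mul_comm (r - k) 2]
      _ = (p ^ r * p ^ (2 * k - r)) * q ^ (2 * (r - k)) := by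
          conv_lhs => rw [e1, pow_add]
      _ ≤ (p ^ r * q ^ (2 * k - r)) * q ^ (2 * (r - k)) := by
          gcongr
      _ = p ^ r * q ^ r := by rw [mul_assoc, ← pow_add, e2]
      _ = (p * q) ^ r := (mul_pow _ _ _).symm
  have hcard : ((Finset.univ.filter
      (fun S : Finset (Fin r) => (r : ℝ) / 2 ≤ (S.card : ℝ))).card : ℝ) ≤ 2 ^ r := by
    have h1 : (Finset.univ.filter
        (fun S : Finset (Fin r) => (r : ℝ) / 2 ≤ (S.card : ℝ))).card ≤ 2 ^ r := by
      calc _ ≤ (Finset.univ : Finset (Finset (Fin r))).card := Finset.card_filter_le _ _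
        _ = 2 ^ r := by rw [Finset.card_univ, Fintype.card_finset, Fintype.card_fin]
    exact_mod_cast h1
  calc ∑ S ∈ Finset.univ.filter (fun S : Finset (Fin r) => (r : ℝ) / 2 ≤ (S.card : ℝ)),
        p ^ S.card * q ^ (r - S.card)
      ≤ (Finset.univ.filter (fun S : Finset (Fin r) => (r : ℝ) / 2 ≤ (S.card : ℝ))).card •
        Real.sqrt ((p * q) ^ r) := Finset.sum_le_card_nsmul _ _ _ hterm
    _ = ((Finset.univ.filter (fun S : Finset (Fin r) => (r : ℝ) / 2 ≤ (S.card : ℝ))).card : ℝ) *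
        Real.sqrt ((p * q) ^ r) := by rw [nsmul_eq_mul]
    _ ≤ 2 ^ r * Real.sqrt ((p * q) ^ r) :=
        mul_le_mul_of_nonneg_right hcard (Real.sqrt_nonneg _)
    _ = Real.sqrt ((4 : ℝ) ^ r * (p * q) ^ r) := by
        rw [Real.sqrt_mul (by positivity)]
        congr 1
        rw [show (4 : ℝ) ^ r = ((2 : ℝ) ^ r) ^ 2 by
          rw [← pow_mul, mul_comm r 2, pow_mul]; norm_num]
        rw [Real.sqrt_sq (by positivity)]
    _ = Real.sqrt ((1 - 4 * ε ^ 2) ^ r) := by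
        rw [← mul_pow]
        congr 2
        simp only [hpdef, hqdef]; ring
    _ ≤ Real.sqrt ((Real.exp (-(4 * ε ^ 2))) ^ r) := by
        apply Real.sqrt_le_sqrt
        apply pow_le_pow_left₀ (by nlinarith)
        linarith [Real.add_one_le_exp (-(4 * ε ^ 2))]
    _ = Real.exp (-(2 * ε ^ 2) * r) := by
        rw [← Real.exp_nat_mul]
        rw [show Real.exp ((r : ℝ) * -(4 * ε ^ 2)) = (Real.exp (-(2 * ε ^ 2) * r)) ^ 2 by
          rw [← Real.exp_nat_mul]; congr 1; push_cast; ring]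
        exact Real.sqrt_sq (Real.exp_nonneg _)
    _ ≤ Real.exp (-(ε ^ 2) * r) := by
        apply Real.exp_le_exp.mpr
        have h0 : (0 : ℝ) ≤ ε ^ 2 * r := by positivity
        nlinarith


end CandidateAux

/-- **Error bound for the Candidate** (Theorem 3 of the paper).
Let `0 < ε < 1/2`, let `w_1, …, w_r` be independent uniform-`[0,1]` random variables,
let `X = #{j : w_j < 1/2 − ε}` and `Y = #{j : w_j > 1/2 + ε}`.  Then
`P(X ≥ r/2) = P(Y ≥ r/2) ≤ exp(−ε² r)`. -/
theorem candidate_error_bound {Ω : Type*} [MeasurableSpace Ω] (μ : Measure Ω)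
    [IsProbabilityMeasure μ] (ε : ℝ) (hε0 : 0 < ε) (hε : ε < 1 / 2)
    (r : ℕ) (hr : 1 ≤ r) (w : Fin r → Ω → ℝ)
    (hmeas : ∀ j, Measurable (w j))
    (hindep : iIndepFun w μ)
    (hunif : ∀ j, Measure.map (w j) μ = volume.restrict (Set.Icc (0 : ℝ) 1)) :
    μ {ω | (r : ℝ) / 2 ≤
        ((Finset.univ.filter fun j => w j ω < 1 / 2 - ε).card : ℝ)} =
      μ {ω | (r : ℝ) / 2 ≤
        ((Finset.univ.filter fun j => 1 / 2 + ε < w j ω).card : ℝ)} ∧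
    μ {ω | (r : ℝ) / 2 ≤
        ((Finset.univ.filter fun j => w j ω < 1 / 2 - ε).card : ℝ)} ≤
      ENNReal.ofReal (Real.exp (-(ε ^ 2) * r)) := by
  classical
  have hpIio : ∀ j, μ (w j ⁻¹' {x | x < 1 / 2 - ε}) = ENNReal.ofReal (1 / 2 - ε) := by
    intro j
    have h1 : {x : ℝ | x < 1 / 2 - ε} = Set.Iio (1 / 2 - ε) := rfl
    rw [h1, ← Measure.map_apply (hmeas j) measurableSet_Iio, hunif j,
      Measure.restrict_apply measurableSet_Iio]
    have h2 : Set.Iio (1 / 2 - ε) ∩ Set.Icc (0 : ℝ) 1 = Set.Ico 0 (1 / 2 - ε) := by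
      ext x
      simp only [Set.mem_inter_iff, Set.mem_Iio, Set.mem_Icc, Set.mem_Ico]
      constructor
      · rintro ⟨h, h0, _⟩; exact ⟨h0, h⟩
      · rintro ⟨h0, h⟩; exact ⟨h, h0, by linarith⟩
    rw [h2, Real.volume_Ico]
    norm_num
  have hpIoi : ∀ j, μ (w j ⁻¹' {x | 1 / 2 + ε < x}) = ENNReal.ofReal (1 / 2 - ε) := by
    intro j
    have h1 : {x : ℝ | 1 / 2 + ε < x} = Set.Ioi (1 / 2 + ε) := rfl
    rw [h1, ← Measure.map_apply (hmeas j) measurableSet_Ioi, hunif j,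
      Measure.restrict_apply measurableSet_Ioi]
    have h2 : Set.Ioi (1 / 2 + ε) ∩ Set.Icc (0 : ℝ) 1 = Set.Ioc (1 / 2 + ε) 1 := by
      ext x
      simp only [Set.mem_inter_iff, Set.mem_Ioi, Set.mem_Icc, Set.mem_Ioc]
      constructor
      · rintro ⟨h, _, h1'⟩; exact ⟨h, h1'⟩
      · rintro ⟨h, h1'⟩; exact ⟨h, by linarith, h1'⟩
    rw [h2, Real.volume_Ioc]
    norm_num
    congr 1
    ring
  have hA := count_event_eq_sum μ w hmeas hindep (fun x => x < 1 / 2 - ε)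
    measurableSet_Iio (ENNReal.ofReal (1 / 2 - ε)) hpIio
  have hB := count_event_eq_sum μ w hmeas hindep (fun x => 1 / 2 + ε < x)
    measurableSet_Ioi (ENNReal.ofReal (1 / 2 - ε)) hpIoi
  have hAB : μ {ω | (r : ℝ) / 2 ≤
      ((Finset.univ.filter fun j => w j ω < 1 / 2 - ε).card : ℝ)} =
      μ {ω | (r : ℝ) / 2 ≤
      ((Finset.univ.filter fun j => 1 / 2 + ε < w j ω).card : ℝ)} := by
    rw [hA, hB]
  refine ⟨hAB, ?_⟩
  rw [hA]
  have hp0 : (0 : ℝ) ≤ 1 / 2 - ε := by linarith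
  have hq0 : (0 : ℝ) ≤ 1 / 2 + ε := by linarith
  have hcompl : (1 : ENNReal) - ENNReal.ofReal (1 / 2 - ε) = ENNReal.ofReal (1 / 2 + ε) := by
    rw [← ENNReal.ofReal_one, ← ENNReal.ofReal_sub _ hp0]
    congr 1
    ring
  have hsum : ∑ S ∈ Finset.univ.filter (fun S : Finset (Fin r) => (r : ℝ) / 2 ≤ (S.card : ℝ)),
        ENNReal.ofReal (1 / 2 - ε) ^ S.card *
          (1 - ENNReal.ofReal (1 / 2 - ε)) ^ (r - S.card)
      = ENNReal.ofReal
        (∑ S ∈ Finset.univ.filter (fun S : Finset (Fin r) => (r : ℝ) / 2 ≤ (S.card : ℝ)),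
          (1 / 2 - ε) ^ S.card * (1 / 2 + ε) ^ (r - S.card)) := by
    rw [ENNReal.ofReal_sum_of_nonneg (fun S _ => by positivity)]
    refine Finset.sum_congr rfl fun S _ => ?_
    rw [hcompl, ENNReal.ofReal_mul (by positivity), ENNReal.ofReal_pow hp0,
      ENNReal.ofReal_pow hq0]
  rw [hsum]
  exact ENNReal.ofReal_le_ofReal (real_tail_bound ε hε0 hε r)
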